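/- There exists a universal constant C (independent of d and k) such that for all integers d ≥ 1 and k ≥ 1, L ⊆ C · L0; equivalently, for every g ∈ ℝ^{[d]^k}, sup_{h ∈ L} ⟨g, h⟩ ≤ C · sup_{h ∈ L0} ⟨g, h⟩. -/

import Mathlib

open Finset Pointwise

/-- First `⌊k/2⌋` coordinates of a `k`-tuple from `[d]`. -/
def tupHead {d k : ℕ} (f : Fin k → Fin d) : Fin (k / 2) → Fin d :=
  fun i => f (Fin.castLE (Nat.div_le_self k 2) i)

/-- Last `⌈k/2⌉ = k − ⌊k/2⌋` coordinates of a `k`-tuple from `[d]`. -/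
def tupTail {d k : ℕ} (f : Fin k → Fin d) : Fin (k - k / 2) → Fin d :=
  fun i => f ⟨k / 2 + i.val, by have := i.isLt; omega⟩

/-- `L0 = conv{w ⊗ z : w ∈ {−1,1}^{[d]^{⌊k/2⌋}}, z ∈ {−1,1}^{[d]^{⌈k/2⌉}}}`. -/
noncomputable def L0set (d k : ℕ) : Set ((Fin k → Fin d) → ℝ) :=
  convexHull ℝ
    {x | ∃ w : (Fin (k / 2) → Fin d) → ℝ, ∃ z : (Fin (k - k / 2) → Fin d) → ℝ,
      (∀ s, w s = 1 ∨ w s = -1) ∧ (∀ t, z t = 1 ∨ z t = -1) ∧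
      x = fun f => w (tupHead f) * z (tupTail f)}

/-- `L ⊆ ℝ^{[d]^k}`: all `h` such that `h_{s·t} = ⟨u_s, v_t⟩` for some unit vectors
`u_s, v_t` in some `ℝ^N`. -/
def Lset (d k : ℕ) : Set ((Fin k → Fin d) → ℝ) :=
  {h | ∃ N : ℕ, ∃ u : (Fin (k / 2) → Fin d) → (Fin N → ℝ),
    ∃ v : (Fin (k - k / 2) → Fin d) → (Fin N → ℝ),
      (∀ s, ∑ n, (u s n) ^ 2 = 1) ∧ (∀ t, ∑ n, (v t n) ^ 2 = 1) ∧
      ∀ f, h f = ∑ n, u (tupHead f) n * v (tupTail f) n}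

namespace Stmt9

lemma tup_ext {d k : ℕ} {f g : Fin k → Fin d} (h1 : tupHead f = tupHead g)
    (h2 : tupTail f = tupTail g) : f = g := by
  funext i
  rcases lt_or_ge i.val (k / 2) with h | h
  · have := congrFun h1 ⟨i.val, h⟩
    simpa [tupHead, Fin.castLE, Fin.ext_iff] using this
  · have hi : i.val - k / 2 < k - k / 2 := by have := i.isLt; omega
    have := congrFun h2 ⟨i.val - k / 2, hi⟩
    simp only [tupTail] at this
    have e : i = ⟨k / 2 + (i.val - k / 2), by have := i.isLt; omega⟩ := by
      apply Fin.ext; simp; omega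
    rw [e]
    exact this

/-- sign of a boolean -/
def sg (b : Bool) : ℝ := if b then 1 else -1

lemma sg_sq (b : Bool) : sg b ^ 2 = 1 := by cases b <;> simp [sg]

lemma sg_not (b : Bool) : sg (!b) = - sg b := by cases b <;> simp [sg]

lemma abs_sg (b : Bool) : |sg b| = 1 := by cases b <;> simp [sg]

variable {α : Type*} [Fintype α] [DecidableEq α]


lemma sum_prod_bool (g : α → Bool → ℝ) :
    ∑ σ : α → Bool, ∏ i, g i (σ i) = ∏ i, (g i true + g i false) := by
  classical
  rw [← Fintype.piFinset_univ,
    ← Finset.prod_univ_sum (fun _ : α => (univ : Finset Bool)) g]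
  exact Finset.prod_congr rfl fun i _ => by simp

lemma prodWeight_sum (w : α → ℝ) :
    ∑ σ : α → Bool, ∏ i, (1 + sg (σ i) * w i) / 2 = 1 := by
  rw [sum_prod_bool (fun i b => (1 + sg b * w i) / 2)]
  apply Finset.prod_eq_one
  intro i _
  simp [sg]; ring

omit [DecidableEq α] in
lemma prodWeight_nonneg (w : α → ℝ) (hw : ∀ i, |w i| ≤ 1) (σ : α → Bool) :
    0 ≤ ∏ i, (1 + sg (σ i) * w i) / 2 := by
  apply Finset.prod_nonneg
  intro i _
  have := abs_le.1 (hw i)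
  cases hσ : σ i <;> simp [sg] <;> linarith [this.1, this.2]

lemma prodWeight_eval (w : α → ℝ) (j : α) :
    ∑ σ : α → Bool, (∏ i, (1 + sg (σ i) * w i) / 2) * sg (σ j) = w j := by
  classical
  have key : ∀ σ : α → Bool, (∏ i, (1 + sg (σ i) * w i) / 2) * sg (σ j)
      = ∏ i, (fun i b => if i = j then sg b * ((1 + sg b * w i) / 2)
          else (1 + sg b * w i) / 2) i (σ i) := by
    intro σ
    set g : α → ℝ := fun i => (1 + sg (σ i) * w i) / 2 with hg
    set F : α → ℝ := fun i => if i = j then sg (σ i) * ((1 + sg (σ i) * w i) / 2)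
          else (1 + sg (σ i) * w i) / 2 with hF
    have h1 : (∏ i, g i) = g j * ∏ i ∈ univ.erase j, g i :=
      (Finset.mul_prod_erase univ g (mem_univ j)).symm
    have h2 : (∏ i, F i) = F j * ∏ i ∈ univ.erase j, F i :=
      (Finset.mul_prod_erase univ F (mem_univ j)).symm
    have h3 : ∏ i ∈ univ.erase j, F i = ∏ i ∈ univ.erase j, g i :=
      Finset.prod_congr rfl fun i hi => by
        simp only [hF, hg, if_neg (Finset.ne_of_mem_erase hi)]
    show (∏ i, g i) * sg (σ j) = ∏ i, F i
    rw [h1, h2, h3]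
    have : F j = sg (σ j) * g j := by simp [hF, hg]
    rw [this]; ring
  rw [Finset.sum_congr rfl fun σ _ => key σ,
    sum_prod_bool (fun i b => if i = j then sg b * ((1 + sg b * w i) / 2)
          else (1 + sg b * w i) / 2)]
  have hsplit : (∏ i, (fun i => (if i = j then sg true * ((1 + sg true * w i) / 2)
        else (1 + sg true * w i) / 2) + (if i = j then sg false * ((1 + sg false * w i) / 2)
        else (1 + sg false * w i) / 2)) i) = w j := by
    set G : α → ℝ := fun i => (if i = j then sg true * ((1 + sg true * w i) / 2)
        else (1 + sg true * w i) / 2) + (if i = j then sg false * ((1 + sg false * w i) / 2)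
        else (1 + sg false * w i) / 2) with hG
    have h2 : (∏ i, G i) = G j * ∏ i ∈ univ.erase j, G i :=
      (Finset.mul_prod_erase univ G (mem_univ j)).symm
    have h3 : ∏ i ∈ univ.erase j, G i = 1 := by
      apply Finset.prod_eq_one
      intro i hi
      simp only [hG, if_neg (Finset.ne_of_mem_erase hi), sg]
      norm_num
      ring
    have h4 : G j = w j := by simp [hG, sg]; ring
    rw [h2, h3, h4, mul_one]
  exact hsplit


section L0facts

variable {d k : ℕ}

lemma sg_pm (b : Bool) : sg b = 1 ∨ sg b = -1 := by cases b <;> simp [sg]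

lemma convex_L0 : Convex ℝ (L0set d k) := convex_convexHull ℝ _

lemma rankOne_mem_L0 (w : (Fin (k / 2) → Fin d) → ℝ) (z : (Fin (k - k / 2) → Fin d) → ℝ)
    (hw : ∀ s, |w s| ≤ 1) (hz : ∀ t, |z t| ≤ 1) :
    (fun f => w (tupHead f) * z (tupTail f)) ∈ L0set d k := by
  classical
  set p : ((Fin (k / 2) → Fin d) → Bool) → ℝ := fun σ => ∏ i, (1 + sg (σ i) * w i) / 2 with hp
  set q : ((Fin (k - k / 2) → Fin d) → Bool) → ℝ := fun τ => ∏ i, (1 + sg (τ i) * z i) / 2 with hq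
  have hmem : ∀ στ : ((Fin (k / 2) → Fin d) → Bool) × ((Fin (k - k / 2) → Fin d) → Bool),
      (fun f => sg (στ.1 (tupHead f)) * sg (στ.2 (tupTail f))) ∈ L0set d k := by
    intro στ
    apply subset_convexHull
    exact ⟨fun s => sg (στ.1 s), fun t => sg (στ.2 t),
      fun s => sg_pm _, fun t => sg_pm _, rfl⟩
  have hsum : ∑ στ : ((Fin (k / 2) → Fin d) → Bool) × ((Fin (k - k / 2) → Fin d) → Bool),
      p στ.1 * q στ.2 = 1 := by
    simp only [Fintype.sum_prod_type]
    rw [← Finset.sum_mul_sum, prodWeight_sum, prodWeight_sum, one_mul]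
  have heq : (fun f => w (tupHead f) * z (tupTail f))
      = ∑ στ : ((Fin (k / 2) → Fin d) → Bool) × ((Fin (k - k / 2) → Fin d) → Bool),
        (p στ.1 * q στ.2) • (fun f => sg (στ.1 (tupHead f)) * sg (στ.2 (tupTail f))) := by
    funext f
    rw [Finset.sum_apply]
    simp only [Pi.smul_apply, smul_eq_mul, Fintype.sum_prod_type]
    rw [Finset.sum_congr rfl fun σ _ => Finset.sum_congr rfl fun τ _ =>
      (by ring : p σ * q τ * (sg (σ (tupHead f)) * sg (τ (tupTail f)))
        = (p σ * sg (σ (tupHead f))) * (q τ * sg (τ (tupTail f))))]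
    rw [← Finset.sum_mul_sum, prodWeight_eval w (tupHead f), prodWeight_eval z (tupTail f)]
  rw [heq]
  exact convex_L0.sum_mem
    (fun στ _ => mul_nonneg (prodWeight_nonneg w hw στ.1) (prodWeight_nonneg z hz στ.2))
    hsum (fun στ _ => hmem στ)

lemma zero_mem_L0 : (0 : (Fin k → Fin d) → ℝ) ∈ L0set d k := by
  have := rankOne_mem_L0 (d := d) (k := k) (fun _ => 0) (fun _ => 0)
    (fun _ => by norm_num) (fun _ => by norm_num)
  simp at this; exact this

lemma smul_L0_mono {a b : ℝ} (ha : 0 ≤ a) (hab : a ≤ b) :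
    a • L0set d k ⊆ b • L0set d k := by
  rcases eq_or_lt_of_le (ha.trans hab) with hb | hb
  · have hab0 : a = 0 := le_antisymm (hab.trans hb.symm.le) ha
    rw [← hb, ← hab0]
  · rintro x ⟨y, hy, rfl⟩
    refine ⟨(a / b) • y + (1 - a / b) • 0, ?_, ?_⟩
    · exact convex_L0 hy zero_mem_L0 (by positivity)
        (by rw [sub_nonneg]; exact div_le_one_of_le₀ hab hb.le) (by ring)
    · show b • ((a / b) • y + (1 - a / b) • (0 : (Fin k → Fin d) → ℝ)) = a • y
      have e1 : b * (a / b) = a := by field_simp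
      rw [smul_zero, add_zero, smul_smul, e1]

lemma add_mem_smul_L0 {x y : (Fin k → Fin d) → ℝ} {a b : ℝ} (ha : 0 < a) (hb : 0 ≤ b)
    (hx : x ∈ a • L0set d k) (hy : y ∈ b • L0set d k) :
    x + y ∈ (a + b) • L0set d k := by
  rcases eq_or_lt_of_le hb with hb0 | hb0
  · subst hb0
    obtain ⟨y', _, rfl⟩ := hy
    simpa using hx
  · obtain ⟨x', hx', rfl⟩ := hx
    obtain ⟨y', hy', rfl⟩ := hy
    have hab : 0 < a + b := by linarith
    refine ⟨(a / (a + b)) • x' + (b / (a + b)) • y', ?_, ?_⟩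
    · exact convex_L0 hx' hy' (by positivity) (by positivity) (by field_simp)
    · show (a + b) • ((a / (a + b)) • x' + (b / (a + b)) • y') = a • x' + b • y'
      have e1 : (a + b) * (a / (a + b)) = a := by field_simp
      have e2 : (a + b) * (b / (a + b)) = b := by field_simp
      rw [smul_add, smul_smul, smul_smul, e1, e2]

end L0facts

section Hypercube

variable {N : ℕ}

lemma flip_involutive (a : Fin N) :
    Function.Involutive (fun σ : Fin N → Bool => Function.update σ a (!σ a)) := by
  intro σ
  funext i
  by_cases h : i = a
  · subst h; simp
  · simp [Function.update, h]

lemma sum_flip_zero (a : Fin N) (F : (Fin N → Bool) → ℝ)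
    (hF : ∀ σ, F (Function.update σ a (!σ a)) = - F σ) : ∑ σ, F σ = 0 := by
  classical
  have h1 : ∑ σ, F (Function.Involutive.toPerm _ (flip_involutive a) σ) = ∑ σ, F σ :=
    Equiv.sum_comp (Function.Involutive.toPerm _ (flip_involutive a)) F
  have h2 : ∑ σ, F (Function.Involutive.toPerm _ (flip_involutive a) σ) = ∑ σ, - F σ :=
    Finset.sum_congr rfl fun σ _ => hF σ
  rw [Finset.sum_neg_distrib] at h2
  linarith [h1.symm.trans h2]

lemma lin_update (u : Fin N → ℝ) (A : Finset (Fin N)) {a : Fin N} (ha : a ∉ A)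
    (σ : Fin N → Bool) (b : Bool) :
    ∑ n ∈ A, sg (Function.update σ a b n) * u n = ∑ n ∈ A, sg (σ n) * u n :=
  Finset.sum_congr rfl fun n hn => by
    rw [Function.update_of_ne (ne_of_mem_of_not_mem hn ha)]

lemma sum_lin_mul (u v : Fin N → ℝ) (A : Finset (Fin N)) :
    ∑ σ : Fin N → Bool, (∑ n ∈ A, sg (σ n) * u n) * (∑ n ∈ A, sg (σ n) * v n)
      = (Fintype.card (Fin N → Bool) : ℝ) * ∑ n ∈ A, u n * v n := by
  classical
  induction A using Finset.induction with
  | empty => simp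
  | insert _ _ ha =>
    rename_i a A ih
    simp only [Finset.sum_insert ha]
    have expand : ∀ σ : Fin N → Bool,
        (sg (σ a) * u a + ∑ n ∈ A, sg (σ n) * u n) * (sg (σ a) * v a + ∑ n ∈ A, sg (σ n) * v n)
        = (∑ n ∈ A, sg (σ n) * u n) * (∑ n ∈ A, sg (σ n) * v n)
          + sg (σ a) * (u a * (∑ n ∈ A, sg (σ n) * v n) + v a * (∑ n ∈ A, sg (σ n) * u n))
          + sg (σ a) ^ 2 * (u a * v a) := by
      intro σ; ring
    rw [Finset.sum_congr rfl fun σ _ => expand σ]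
    rw [Finset.sum_add_distrib, Finset.sum_add_distrib]
    have hodd : ∑ σ : Fin N → Bool,
        sg (σ a) * (u a * (∑ n ∈ A, sg (σ n) * v n) + v a * (∑ n ∈ A, sg (σ n) * u n)) = 0 := by
      apply sum_flip_zero a
      intro σ
      rw [lin_update u A ha, lin_update v A ha, Function.update_self, sg_not]
      ring
    have hsq : ∑ σ : Fin N → Bool, sg (σ a) ^ 2 * (u a * v a)
        = (Fintype.card (Fin N → Bool) : ℝ) * (u a * v a) := by
      rw [Finset.sum_congr rfl fun σ _ => by rw [sg_sq, one_mul]]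
      rw [Finset.sum_const, Finset.card_univ, nsmul_eq_mul]
    rw [ih, hodd, hsq]
    ring

lemma sum_lin_sq (u : Fin N → ℝ) (A : Finset (Fin N)) :
    ∑ σ : Fin N → Bool, (∑ n ∈ A, sg (σ n) * u n) ^ 2
      = (Fintype.card (Fin N → Bool) : ℝ) * ∑ n ∈ A, u n ^ 2 := by
  have := sum_lin_mul u u A
  simpa [sq] using this

lemma sum_lin_four (u : Fin N → ℝ) (A : Finset (Fin N)) :
    ∑ σ : Fin N → Bool, (∑ n ∈ A, sg (σ n) * u n) ^ 4
      ≤ 3 * (Fintype.card (Fin N → Bool) : ℝ) * (∑ n ∈ A, u n ^ 2) ^ 2 := by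
  classical
  induction A using Finset.induction with
  | empty => simp
  | insert _ _ ha =>
    rename_i a A ih
    simp only [Finset.sum_insert ha]
    have expand : ∀ σ : Fin N → Bool,
        (sg (σ a) * u a + ∑ n ∈ A, sg (σ n) * u n) ^ 4
        = (∑ n ∈ A, sg (σ n) * u n) ^ 4
          + 6 * (sg (σ a) ^ 2) * u a ^ 2 * (∑ n ∈ A, sg (σ n) * u n) ^ 2
          + (sg (σ a) ^ 2) ^ 2 * u a ^ 4
          + sg (σ a) * (4 * u a * (∑ n ∈ A, sg (σ n) * u n) ^ 3
              + 4 * (sg (σ a) ^ 2) * u a ^ 3 * (∑ n ∈ A, sg (σ n) * u n)) := by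
      intro σ; ring
    rw [Finset.sum_congr rfl fun σ _ => by rw [expand σ, sg_sq]]
    rw [Finset.sum_add_distrib, Finset.sum_add_distrib, Finset.sum_add_distrib]
    have hodd : ∑ σ : Fin N → Bool,
        sg (σ a) * (4 * u a * (∑ n ∈ A, sg (σ n) * u n) ^ 3
          + 4 * 1 * u a ^ 3 * (∑ n ∈ A, sg (σ n) * u n)) = 0 := by
      apply sum_flip_zero a
      intro σ
      rw [lin_update u A ha, Function.update_self, sg_not]
      ring
    have hsq : ∑ σ : Fin N → Bool, 6 * 1 * u a ^ 2 * (∑ n ∈ A, sg (σ n) * u n) ^ 2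
        = 6 * u a ^ 2 * ((Fintype.card (Fin N → Bool) : ℝ) * ∑ n ∈ A, u n ^ 2) := by
      rw [← Finset.mul_sum, sum_lin_sq]
      ring
    have hconst : ∑ σ : Fin N → Bool, (1:ℝ) ^ 2 * u a ^ 4
        = (Fintype.card (Fin N → Bool) : ℝ) * u a ^ 4 := by
      rw [Finset.sum_const, Finset.card_univ, nsmul_eq_mul]
      ring
    rw [hodd, hsq, hconst, add_zero]
    have hcard : (0:ℝ) ≤ (Fintype.card (Fin N → Bool) : ℝ) := Nat.cast_nonneg _
    have hA : (0:ℝ) ≤ ∑ n ∈ A, u n ^ 2 := Finset.sum_nonneg fun n _ => sq_nonneg _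
    nlinarith [ih, sq_nonneg (u a), sq_nonneg (u a ^ 2), mul_nonneg hcard (sq_nonneg (u a ^ 2))]

end Hypercube

section Clip

noncomputable def clip (x : ℝ) : ℝ := max (-16) (min 16 x)

noncomputable def rmd (x : ℝ) : ℝ := x - clip x

lemma clip_add_rmd (x : ℝ) : clip x + rmd x = x := by simp [rmd]

lemma abs_clip_le (x : ℝ) : |clip x| ≤ 16 := by
  rw [abs_le]
  constructor
  · exact le_max_left _ _
  · exact max_le (by norm_num) (min_le_left _ _)

lemma clip_sq_le (x : ℝ) : clip x ^ 2 ≤ x ^ 2 := by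
  unfold clip
  rcases le_total x (-16) with h | h
  · rw [min_eq_right (by linarith), max_eq_left h]
    nlinarith
  · rcases le_total 16 x with h2 | h2
    · rw [min_eq_left h2, max_eq_right (by norm_num)]
      nlinarith
    · rw [min_eq_right h2, max_eq_right h]

lemma rmd_sq_le (x : ℝ) : rmd x ^ 2 ≤ x ^ 4 / 256 := by
  unfold rmd clip
  rcases le_total x (-16) with h | h
  · rw [min_eq_right (by linarith), max_eq_left h]
    nlinarith [sq_nonneg (x + 16), sq_nonneg x, sq_nonneg (x^2 - 256)]
  · rcases le_total 16 x with h2 | h2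
    · rw [min_eq_left h2, max_eq_right (by norm_num)]
      nlinarith [sq_nonneg (x - 16), sq_nonneg x, sq_nonneg (x^2 - 256)]
    · rw [min_eq_right h2, max_eq_right h]
      simp
      positivity

end Clip

section Gram

variable {d k : ℕ}

lemma gram_mem {ι : Type} [Fintype ι]
    (a : (Fin (k / 2) → Fin d) → ι → ℝ) (b : (Fin (k - k / 2) → Fin d) → ι → ℝ)
    {A B : ℝ} (hA : 0 < A) (hB : 0 < B)
    (ha : ∀ s, ∑ i, a s i ^ 2 ≤ A ^ 2) (hb : ∀ t, ∑ i, b t i ^ 2 ≤ B ^ 2) :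
    ∃ h' ∈ Lset d k,
      ∀ f : Fin k → Fin d, ∑ i, a (tupHead f) i * b (tupTail f) i = (A * B) * h' f := by
  classical
  set γ := (ι ⊕ ((Fin (k / 2) → Fin d) ⊕ (Fin (k - k / 2) → Fin d))) with hγ
  set N' := Fintype.card γ with hN'
  set e : γ ≃ Fin N' := Fintype.equivFin γ with he
  set u' : (Fin (k / 2) → Fin d) → Fin N' → ℝ := fun s n =>
    Sum.casesOn (e.symm n) (fun i => a s i / A)
      (fun st => Sum.casesOn st
        (fun s' => if s' = s then Real.sqrt (1 - (∑ i, a s i ^ 2) / A ^ 2) else 0)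
        (fun _ => 0)) with hu'
  set v' : (Fin (k - k / 2) → Fin d) → Fin N' → ℝ := fun t n =>
    Sum.casesOn (e.symm n) (fun i => b t i / B)
      (fun st => Sum.casesOn st
        (fun _ => 0)
        (fun t' => if t' = t then Real.sqrt (1 - (∑ i, b t i ^ 2) / B ^ 2) else 0)) with hv'
  have hqa : ∀ s, 0 ≤ 1 - (∑ i, a s i ^ 2) / A ^ 2 := by
    intro s
    rw [sub_nonneg]
    exact div_le_one_of_le₀ (ha s) (sq_nonneg A)
  have hqb : ∀ t, 0 ≤ 1 - (∑ i, b t i ^ 2) / B ^ 2 := by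
    intro t
    rw [sub_nonneg]
    exact div_le_one_of_le₀ (hb t) (sq_nonneg B)
  have sum_via : ∀ g : Fin N' → ℝ, ∑ n, g n = ∑ x : γ, g (e x) :=
    fun g => (Equiv.sum_comp e g).symm
  have hunorm : ∀ s, ∑ n, u' s n ^ 2 = 1 := by
    intro s
    rw [sum_via (fun n => u' s n ^ 2)]
    have : ∀ x : γ, u' s (e x) ^ 2 = Sum.casesOn x (fun i => (a s i / A) ^ 2)
        (fun st => Sum.casesOn st
          (fun s' => if s' = s then 1 - (∑ i, a s i ^ 2) / A ^ 2 else 0) (fun _ => 0)) := by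
      intro x
      simp only [hu', Equiv.symm_apply_apply]
      rcases x with i | s' | t'
      · rfl
      · by_cases hs : s' = s
        · simp [hs, Real.sq_sqrt (hqa s)]
        · simp [hs]
      · simp
    rw [Finset.sum_congr rfl fun x _ => this x]
    rw [Fintype.sum_sum_type, Fintype.sum_sum_type]
    rw [Finset.sum_ite_eq' univ s (fun _ => 1 - (∑ i, a s i ^ 2) / A ^ 2)]
    simp only [mem_univ, if_true, Finset.sum_const_zero, add_zero, div_pow]
    rw [← Finset.sum_div]
    field_simp
    ring
  have hvnorm : ∀ t, ∑ n, v' t n ^ 2 = 1 := by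
    intro t
    rw [sum_via (fun n => v' t n ^ 2)]
    have : ∀ x : γ, v' t (e x) ^ 2 = Sum.casesOn x (fun i => (b t i / B) ^ 2)
        (fun st => Sum.casesOn st (fun _ => 0)
          (fun t' => if t' = t then 1 - (∑ i, b t i ^ 2) / B ^ 2 else 0)) := by
      intro x
      simp only [hv', Equiv.symm_apply_apply]
      rcases x with i | s' | t'
      · rfl
      · simp
      · by_cases ht : t' = t
        · simp [ht, Real.sq_sqrt (hqb t)]
        · simp [ht]
    rw [Finset.sum_congr rfl fun x _ => this x]
    rw [Fintype.sum_sum_type, Fintype.sum_sum_type]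
    rw [Finset.sum_ite_eq' univ t (fun _ => 1 - (∑ i, b t i ^ 2) / B ^ 2)]
    simp only [mem_univ, if_true, Finset.sum_const_zero, zero_add, add_zero, div_pow]
    rw [← Finset.sum_div]
    field_simp
    ring
  have hinner : ∀ s t, ∑ n, u' s n * v' t n = (∑ i, a s i * b t i) / (A * B) := by
    intro s t
    rw [sum_via (fun n => u' s n * v' t n)]
    have : ∀ x : γ, u' s (e x) * v' t (e x) = Sum.casesOn x (fun i => (a s i * b t i) / (A * B))
        (fun st => Sum.casesOn st (fun _ => (0:ℝ)) (fun _ => 0)) := by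
      intro x
      simp only [hu', hv', Equiv.symm_apply_apply]
      rcases x with i | s' | t'
      · show a s i / A * (b t i / B) = _
        field_simp
      · simp
      · simp
    rw [Finset.sum_congr rfl fun x _ => this x]
    rw [Fintype.sum_sum_type, Fintype.sum_sum_type]
    simp only [Finset.sum_const_zero, add_zero, ← Finset.sum_div]
  refine ⟨fun f => ∑ n, u' (tupHead f) n * v' (tupTail f) n,
    ⟨N', u', v', hunorm, hvnorm, fun f => rfl⟩, ?_⟩
  intro f
  simp only [hinner (tupHead f) (tupTail f)]
  field_simp

end Gram

section Apriori

variable {d k : ℕ}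

lemma abs_le_one_of_mem {h : (Fin k → Fin d) → ℝ} (hh : h ∈ Lset d k) (f : Fin k → Fin d) :
    |h f| ≤ 1 := by
  obtain ⟨N, u, v, hu, hv, he⟩ := hh
  have cs := Finset.sum_mul_sq_le_sq_mul_sq univ (u (tupHead f)) (v (tupTail f))
  rw [hu (tupHead f), hv (tupTail f), one_mul] at cs
  rw [he f, abs_le]
  constructor <;> nlinarith [cs]

lemma lset_subset_card (hd : 1 ≤ d) :
    Lset d k ⊆ ((Fintype.card (Fin k → Fin d) : ℝ)) • L0set d k := by
  classical
  intro h hh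
  have habs := abs_le_one_of_mem hh
  have hne : Nonempty (Fin k → Fin d) := ⟨fun _ => ⟨0, hd⟩⟩
  set c : ℝ := (Fintype.card (Fin k → Fin d) : ℝ) with hc
  have hcpos : 0 < c := by
    rw [hc]
    exact_mod_cast Fintype.card_pos
  have hD : ∀ f0 : Fin k → Fin d,
      (fun f => (if tupHead f0 = tupHead f then h f0 else 0)
        * (if tupTail f0 = tupTail f then 1 else 0)) ∈ L0set d k := by
    intro f0
    exact rankOne_mem_L0 (fun s => if tupHead f0 = s then h f0 else 0)
      (fun t => if tupTail f0 = t then 1 else 0)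
      (fun s => by by_cases hs : tupHead f0 = s <;> simp [hs, habs f0])
      (fun t => by by_cases ht : tupTail f0 = t <;> simp [ht])
  refine Set.mem_smul_set.2 ⟨c⁻¹ • h, ?_, smul_inv_smul₀ hcpos.ne' h⟩
  have heq : c⁻¹ • h = ∑ f0 : Fin k → Fin d, c⁻¹ •
      (fun f => (if tupHead f0 = tupHead f then h f0 else 0)
        * (if tupTail f0 = tupTail f then 1 else 0)) := by
    funext f
    rw [Finset.sum_apply]
    simp only [Pi.smul_apply, smul_eq_mul]
    have hterm : ∀ f0 : Fin k → Fin d,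
        c⁻¹ * ((if tupHead f0 = tupHead f then h f0 else 0)
          * (if tupTail f0 = tupTail f then 1 else 0))
        = if f0 = f then c⁻¹ * h f else 0 := by
      intro f0
      by_cases hf : f0 = f
      · subst hf; simp
      · have : ¬ (tupHead f0 = tupHead f ∧ tupTail f0 = tupTail f) := by
          intro ⟨h1, h2⟩; exact hf (tup_ext h1 h2)
        rcases not_and_or.1 this with hcase | hcase
        · rw [if_neg hcase, if_neg hf]; ring
        · rw [if_neg hcase, if_neg hf]; ring
    rw [Finset.sum_congr rfl fun f0 _ => hterm f0]
    rw [Finset.sum_ite_eq' univ f (fun _ => c⁻¹ * h f)]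
    simp
  rw [heq]
  exact convex_L0.sum_mem (fun f0 _ => by positivity)
    (by rw [Finset.sum_const, Finset.card_univ, nsmul_eq_mul, ← hc, mul_inv_cancel₀ hcpos.ne'])
    (fun f0 _ => hD f0)

end Apriori

section Step

variable {d k : ℕ}

lemma step (C : ℝ) (hC : 0 ≤ C) (hL : Lset d k ⊆ C • L0set d k) :
    Lset d k ⊆ (256 + C / 2) • L0set d k := by
  classical
  rintro h ⟨N, u, v, hu, hv, hh⟩
  set κ : ℝ := (Fintype.card (Fin N → Bool) : ℝ) with hκdef
  have hκ : 0 < κ := by rw [hκdef]; exact_mod_cast Fintype.card_pos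
  set X : (Fin (k / 2) → Fin d) → (Fin N → Bool) → ℝ :=
    fun s σ => ∑ n, sg (σ n) * u s n with hX
  set Y : (Fin (k - k / 2) → Fin d) → (Fin N → Bool) → ℝ :=
    fun t σ => ∑ n, sg (σ n) * v t n with hY
  have hXY : ∀ s t, ∑ σ, X s σ * Y t σ = κ * ∑ n, u s n * v t n :=
    fun s t => sum_lin_mul (u s) (v t) univ
  have hXsq : ∀ s, ∑ σ, X s σ ^ 2 = κ := by
    intro s
    have := sum_lin_sq (u s) univ
    rw [hu s] at this
    rw [← hκdef] at this
    simpa using this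
  have hYsq : ∀ t, ∑ σ, Y t σ ^ 2 = κ := by
    intro t
    have := sum_lin_sq (v t) univ
    rw [hv t] at this
    rw [← hκdef] at this
    simpa using this
  have hX4 : ∀ s, ∑ σ, X s σ ^ 4 ≤ 3 * κ := by
    intro s
    have := sum_lin_four (u s) univ
    rw [hu s, ← hκdef] at this
    simpa using this
  have hY4 : ∀ t, ∑ σ, Y t σ ^ 4 ≤ 3 * κ := by
    intro t
    have := sum_lin_four (v t) univ
    rw [hv t, ← hκdef] at this
    simpa using this
  -- the four pieces
  have hmain : h = (fun f => ∑ σ, κ⁻¹ * (clip (X (tupHead f) σ) * clip (Y (tupTail f) σ)))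
      + (fun f => ∑ σ, κ⁻¹ * (clip (X (tupHead f) σ) * rmd (Y (tupTail f) σ)))
      + (fun f => ∑ σ, κ⁻¹ * (rmd (X (tupHead f) σ) * clip (Y (tupTail f) σ)))
      + (fun f => ∑ σ, κ⁻¹ * (rmd (X (tupHead f) σ) * rmd (Y (tupTail f) σ))) := by
    funext f
    simp only [Pi.add_apply]
    have h1 : h f = κ⁻¹ * ∑ σ, X (tupHead f) σ * Y (tupTail f) σ := by
      rw [hXY (tupHead f) (tupTail f), hh f, ← mul_assoc, inv_mul_cancel₀ hκ.ne', one_mul]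
    rw [h1, Finset.mul_sum, ← Finset.sum_add_distrib, ← Finset.sum_add_distrib,
      ← Finset.sum_add_distrib]
    apply Finset.sum_congr rfl
    intro σ _
    simp only [rmd]
    ring
  -- piece 1 : the clipped part
  have hP : (fun f => ∑ σ, κ⁻¹ * (clip (X (tupHead f) σ) * clip (Y (tupTail f) σ)))
      ∈ (256 : ℝ) • L0set d k := by
    refine Set.mem_smul_set.2
      ⟨∑ σ : Fin N → Bool, κ⁻¹ •
        (fun f => (clip (X (tupHead f) σ) / 16) * (clip (Y (tupTail f) σ) / 16)), ?_, ?_⟩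
    · exact convex_L0.sum_mem (fun σ _ => by positivity)
        (by rw [Finset.sum_const, Finset.card_univ, nsmul_eq_mul, ← hκdef,
          mul_inv_cancel₀ hκ.ne'])
        (fun σ _ => rankOne_mem_L0 (fun s => clip (X s σ) / 16) (fun t => clip (Y t σ) / 16)
          (fun s => by
            rw [abs_div, abs_of_nonneg (by norm_num : (0:ℝ) ≤ 16),
              div_le_one (by norm_num : (0:ℝ) < 16)]
            exact abs_clip_le _)
          (fun t => by
            rw [abs_div, abs_of_nonneg (by norm_num : (0:ℝ) ≤ 16),
              div_le_one (by norm_num : (0:ℝ) < 16)]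
            exact abs_clip_le _))
    · funext f
      rw [Pi.smul_apply, Finset.sum_apply]
      simp only [Pi.smul_apply, smul_eq_mul]
      rw [Finset.mul_sum]
      apply Finset.sum_congr rfl
      intro σ _
      ring
  -- bounds for the gram pieces
  have hclipbound : ∀ s, ∑ σ, (Real.sqrt κ⁻¹ * clip (X s σ)) ^ 2 ≤ (1:ℝ) ^ 2 := by
    intro s
    have hrw : ∀ σ : Fin N → Bool, (Real.sqrt κ⁻¹ * clip (X s σ)) ^ 2
        = κ⁻¹ * clip (X s σ) ^ 2 := fun σ => by
      rw [mul_pow, Real.sq_sqrt (by positivity)]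
    rw [Finset.sum_congr rfl fun σ _ => hrw σ, ← Finset.mul_sum]
    have hle : ∑ σ, clip (X s σ) ^ 2 ≤ κ :=
      (Finset.sum_le_sum fun σ _ => clip_sq_le _).trans (hXsq s).le
    calc κ⁻¹ * ∑ σ, clip (X s σ) ^ 2 ≤ κ⁻¹ * κ :=
          mul_le_mul_of_nonneg_left hle (by positivity)
      _ = 1 := inv_mul_cancel₀ hκ.ne'
      _ ≤ (1:ℝ) ^ 2 := by norm_num
  have hclipboundY : ∀ t, ∑ σ, (Real.sqrt κ⁻¹ * clip (Y t σ)) ^ 2 ≤ (1:ℝ) ^ 2 := by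
    intro t
    have hrw : ∀ σ : Fin N → Bool, (Real.sqrt κ⁻¹ * clip (Y t σ)) ^ 2
        = κ⁻¹ * clip (Y t σ) ^ 2 := fun σ => by
      rw [mul_pow, Real.sq_sqrt (by positivity)]
    rw [Finset.sum_congr rfl fun σ _ => hrw σ, ← Finset.mul_sum]
    have hle : ∑ σ, clip (Y t σ) ^ 2 ≤ κ :=
      (Finset.sum_le_sum fun σ _ => clip_sq_le _).trans (hYsq t).le
    calc κ⁻¹ * ∑ σ, clip (Y t σ) ^ 2 ≤ κ⁻¹ * κ :=
          mul_le_mul_of_nonneg_left hle (by positivity)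
      _ = 1 := inv_mul_cancel₀ hκ.ne'
      _ ≤ (1:ℝ) ^ 2 := by norm_num
  have hrmdbound : ∀ s, ∑ σ, (Real.sqrt κ⁻¹ * rmd (X s σ)) ^ 2 ≤ (1/8 : ℝ) ^ 2 := by
    intro s
    have hrw : ∀ σ : Fin N → Bool, (Real.sqrt κ⁻¹ * rmd (X s σ)) ^ 2
        = κ⁻¹ * rmd (X s σ) ^ 2 := fun σ => by
      rw [mul_pow, Real.sq_sqrt (by positivity)]
    rw [Finset.sum_congr rfl fun σ _ => hrw σ, ← Finset.mul_sum]
    have hle : ∑ σ, rmd (X s σ) ^ 2 ≤ 3 * κ / 256 := by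
      calc ∑ σ, rmd (X s σ) ^ 2 ≤ ∑ σ, X s σ ^ 4 / 256 :=
            Finset.sum_le_sum fun σ _ => rmd_sq_le _
        _ = (∑ σ, X s σ ^ 4) / 256 := by rw [Finset.sum_div]
        _ ≤ 3 * κ / 256 := by linarith [hX4 s]
    calc κ⁻¹ * ∑ σ, rmd (X s σ) ^ 2 ≤ κ⁻¹ * (3 * κ / 256) :=
          mul_le_mul_of_nonneg_left hle (by positivity)
      _ = 3 / 256 := by field_simp
      _ ≤ (1/8 : ℝ) ^ 2 := by norm_num
  have hrmdboundY : ∀ t, ∑ σ, (Real.sqrt κ⁻¹ * rmd (Y t σ)) ^ 2 ≤ (1/8 : ℝ) ^ 2 := by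
    intro t
    have hrw : ∀ σ : Fin N → Bool, (Real.sqrt κ⁻¹ * rmd (Y t σ)) ^ 2
        = κ⁻¹ * rmd (Y t σ) ^ 2 := fun σ => by
      rw [mul_pow, Real.sq_sqrt (by positivity)]
    rw [Finset.sum_congr rfl fun σ _ => hrw σ, ← Finset.mul_sum]
    have hle : ∑ σ, rmd (Y t σ) ^ 2 ≤ 3 * κ / 256 := by
      calc ∑ σ, rmd (Y t σ) ^ 2 ≤ ∑ σ, Y t σ ^ 4 / 256 :=
            Finset.sum_le_sum fun σ _ => rmd_sq_le _
        _ = (∑ σ, Y t σ ^ 4) / 256 := by rw [Finset.sum_div]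
        _ ≤ 3 * κ / 256 := by linarith [hY4 t]
    calc κ⁻¹ * ∑ σ, rmd (Y t σ) ^ 2 ≤ κ⁻¹ * (3 * κ / 256) :=
          mul_le_mul_of_nonneg_left hle (by positivity)
      _ = 3 / 256 := by field_simp
      _ ≤ (1/8 : ℝ) ^ 2 := by norm_num
  have hsqrtmul : Real.sqrt κ⁻¹ * Real.sqrt κ⁻¹ = κ⁻¹ := Real.mul_self_sqrt (by positivity)
  -- generic gram piece
  have gram_piece : ∀ (a' : (Fin (k / 2) → Fin d) → (Fin N → Bool) → ℝ)
      (b' : (Fin (k - k / 2) → Fin d) → (Fin N → Bool) → ℝ) (A B : ℝ), 0 < A → 0 < B →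
      (∀ s, ∑ σ, (Real.sqrt κ⁻¹ * a' s σ) ^ 2 ≤ A ^ 2) →
      (∀ t, ∑ σ, (Real.sqrt κ⁻¹ * b' t σ) ^ 2 ≤ B ^ 2) →
      (fun f => ∑ σ, κ⁻¹ * (a' (tupHead f) σ * b' (tupTail f) σ)) ∈ (A * B * C) • L0set d k := by
    intro a' b' A B hA hB ha' hb'
    obtain ⟨h1, hmem1, heq1⟩ := gram_mem (fun s σ => Real.sqrt κ⁻¹ * a' s σ)
      (fun t σ => Real.sqrt κ⁻¹ * b' t σ) hA hB ha' hb'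
    obtain ⟨y, hy, hyeq⟩ := hL hmem1
    refine Set.mem_smul_set.2 ⟨y, hy, ?_⟩
    funext f
    have e1 : ∑ σ, (Real.sqrt κ⁻¹ * a' (tupHead f) σ) * (Real.sqrt κ⁻¹ * b' (tupTail f) σ)
        = ∑ σ, κ⁻¹ * (a' (tupHead f) σ * b' (tupTail f) σ) := by
      apply Finset.sum_congr rfl
      intro σ _
      have hre : Real.sqrt κ⁻¹ * a' (tupHead f) σ * (Real.sqrt κ⁻¹ * b' (tupTail f) σ)
          = (Real.sqrt κ⁻¹ * Real.sqrt κ⁻¹) * (a' (tupHead f) σ * b' (tupTail f) σ) := by ring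
      rw [hre, hsqrtmul]
    have e2 := heq1 f
    rw [e1] at e2
    have e3 : h1 f = C * y f := by rw [← hyeq]; simp
    show (A * B * C) * y f = _
    rw [e2, e3]
    ring
  have hR1 := gram_piece (fun s σ => clip (X s σ)) (fun t σ => rmd (Y t σ)) 1 (1/8)
    one_pos (by norm_num) hclipbound hrmdboundY
  have hR2 := gram_piece (fun s σ => rmd (X s σ)) (fun t σ => clip (Y t σ)) (1/8) 1
    (by norm_num) one_pos hrmdbound hclipboundY
  have hR3 := gram_piece (fun s σ => rmd (X s σ)) (fun t σ => rmd (Y t σ)) (1/8) (1/8)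
    (by norm_num) (by norm_num) hrmdbound hrmdboundY
  rw [hmain]
  have hcomb := add_mem_smul_L0 (by linarith : (0:ℝ) < 256 + 1 * (1/8) * C + 1/8 * 1 * C)
    (by positivity : (0:ℝ) ≤ 1/8 * (1/8) * C)
    (add_mem_smul_L0 (by linarith : (0:ℝ) < 256 + 1 * (1/8) * C)
      (by positivity : (0:ℝ) ≤ 1/8 * 1 * C)
      (add_mem_smul_L0 (by norm_num : (0:ℝ) < 256)
        (by positivity : (0:ℝ) ≤ 1 * (1/8) * C) hP hR1) hR2) hR3
  refine smul_L0_mono (by positivity) ?_ hcomb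
  linarith

end Step

section Iterate

variable {d k : ℕ}

lemma iterate_bound (hd : 1 ≤ d) : ∀ n : ℕ,
    Lset d k ⊆ ((512 : ℝ) + (Fintype.card (Fin k → Fin d) : ℝ) / 2 ^ n) • L0set d k := by
  intro n
  induction n with
  | zero =>
    refine (lset_subset_card hd).trans (smul_L0_mono (Nat.cast_nonneg _) ?_)
    have : (0:ℝ) ≤ (Fintype.card (Fin k → Fin d) : ℝ) := Nat.cast_nonneg _
    simp only [pow_zero, div_one]
    linarith
  | succ n ih =>
    have hC : (0:ℝ) ≤ 512 + (Fintype.card (Fin k → Fin d) : ℝ) / 2 ^ n := by positivity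
    have hstep := step _ hC ih
    refine hstep.trans (smul_L0_mono (by positivity) (le_of_eq ?_))
    rw [pow_succ]
    ring

end Iterate

end Stmt9

/-- There is a universal constant `C > 0` (independent of `d` and `k`)
such that `L ⊆ C · L0` for all `d, k ≥ 1`. -/
theorem stmt_9 : ∃ C : ℝ, 0 < C ∧
    ∀ (d k : ℕ), 1 ≤ d → 1 ≤ k → Lset d k ⊆ C • L0set d k := by
  refine ⟨513, by norm_num, fun d k hd _ => ?_⟩
  set c := Fintype.card (Fin k → Fin d) with hc
  refine (Stmt9.iterate_bound hd c).trans (Stmt9.smul_L0_mono (by positivity) ?_)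
  have h1 : (c : ℝ) ≤ 2 ^ c := by
    have := (@Nat.lt_two_pow_self c).le
    exact_mod_cast this
  have h2 : (0:ℝ) < 2 ^ c := by positivity
  have : (c : ℝ) / 2 ^ c ≤ 1 := by
    rw [div_le_one h2]; exact h1
  linarith
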